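/- Under the Bellman equation V*(x) = max_u E_w[r(x,u) + γ V*(F(x,u,w))] with γ ∈ (0,1), rewards bounded above by R_max < 0 outside the goal set, and W := -V*, for any x with 0 < W(x) ≤ W_max where W_max < |R_max|/(1-γ), the optimal action u*(x) satisfies E_w[W(F(x,u*(x),w))] ≤ c·W(x) with c = (1/γ)(1 + R_max/W_max), and c < 1. -/

import Mathlib

open MeasureTheory

/-- Value function as a stochastic CLF (decrease condition): under the Bellman
equation with strictly negative rewards outside the goal set, `W = -V*` contracts
in expectation under the optimal action with rate `c = (1/γ)(1 + Rmax/Wmax) < 1`,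
on the region `0 < W(x) ≤ Wmax` with `Wmax < |Rmax|/(1-γ)`. -/
theorem value_function_is_stochastic_CLF
    {X U Wsp : Type*} [MeasurableSpace Wsp]
    (ν : Measure Wsp) [IsProbabilityMeasure ν]
    (γ : ℝ) (hγ : γ ∈ Set.Ioo (0 : ℝ) 1)
    (r : X → U → ℝ) (F : X → U → Wsp → X) (G : Set X)
    (Rmax : ℝ) (hRmax : Rmax < 0)
    (h_out_reward : ∀ x ∉ G, ∀ u, r x u ≤ Rmax)
    (V : X → ℝ) (Q : X → U → ℝ) (ustar : X → U)
    -- Bellman equation `Q*(x,u) = E_w[r(x,u) + γ V*(F(x,u,w))]`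
    (hBellman : ∀ x u, Q x u = ∫ w, (r x u + γ * V (F x u w)) ∂ν)
    -- optimality: `V*(x) = max_u Q*(x,u)`, attained by `u*(x)`
    (hOpt : ∀ x, V x = Q x (ustar x))
    (hMax : ∀ x u, Q x u ≤ V x)
    (hInt : ∀ x u, Integrable (fun w => V (F x u w)) ν)
    (Wfun : X → ℝ) (hW : ∀ x, Wfun x = -V x)
    (Wmax : ℝ) (hWmax : Wmax < |Rmax| / (1 - γ)) (hWmaxPos : 0 < Wmax)
    (c : ℝ) (hc : c = (1 / γ) * (1 + Rmax / Wmax)) :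
    c < 1 ∧
      ∀ x ∉ G, 0 < Wfun x → Wfun x ≤ Wmax →
        (∫ w, Wfun (F x (ustar x) w) ∂ν) ≤ c * Wfun x := by

  obtain ⟨hγ0, hγ1⟩ := hγ
  have habs : |Rmax| = -Rmax := abs_of_neg hRmax
  have hWRm : Wmax * (1 - γ) < -Rmax := by
    rw [habs] at hWmax
    exact (lt_div_iff₀ (by linarith)).mp hWmax
  constructor
  · rw [hc]
    have hd : Rmax / Wmax < γ - 1 := by
      rw [div_lt_iff₀ hWmaxPos]; nlinarith
    rw [div_mul_eq_mul_div, one_mul, div_lt_one hγ0]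
    linarith
  · intro x hx hpos hle
    have hint := hInt x (ustar x)
    have hVx : V x = r x (ustar x) + γ * ∫ w, V (F x (ustar x) w) ∂ν := by
      rw [hOpt x, hBellman x (ustar x)]
      rw [integral_add (integrable_const _) (hint.const_mul γ)]
      rw [MeasureTheory.integral_const_mul]
      simp
    have hWint : (∫ w, Wfun (F x (ustar x) w) ∂ν) = -∫ w, V (F x (ustar x) w) ∂ν := by
      rw [← integral_neg]
      exact integral_congr_ae (Filter.Eventually.of_forall fun w => hW _)
    have hr : r x (ustar x) ≤ Rmax := h_out_reward x hx (ustar x)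
    rw [hWint]
    have hWx : Wfun x = -V x := hW x
    -- ∫ V(F) = (V x - r)/γ, so -∫V(F) = (r + W x)/γ ≤ (Rmax + Wx)/γ ≤ c Wx
    have key : γ * (-∫ w, V (F x (ustar x) w) ∂ν) = r x (ustar x) + Wfun x := by
      rw [hWx]; linarith
    rw [hc]
    rw [← mul_le_mul_iff_right₀ hγ0, key]
    have : γ * (1 / γ * (1 + Rmax / Wmax) * Wfun x) = (1 + Rmax / Wmax) * Wfun x := by
      field_simp
    rw [this]
    have h1 : Rmax * (Wfun x / Wmax) ≥ Rmax := by
      nlinarith [div_le_one_of_le₀ hle (le_of_lt hWmaxPos), div_pos hpos hWmaxPos]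
    have h2 : (1 + Rmax / Wmax) * Wfun x = Wfun x + Rmax * (Wfun x / Wmax) := by
      field_simp
    linarith
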